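/- For all m with −1 ≤ m ≤ τ−1, the following two identities hold: p_{τ−m−2} = (−1)^{m−1} p_{τ−1} p_m + (−1)^m N q_{τ−1} q_m, and q_{τ−m−2} = (−1)^m p_{τ−1} q_m + (−1)^{m−1} q_{τ−1} p_m. -/

import Mathlib

lemma cfUnique (x y : ℕ → ℝ) (b : ℕ → ℤ) (hb : ∀ k, 1 ≤ b k)
    (hx1 : ∀ k, 1 < x k) (hy1 : ∀ k, 1 < y k)
    (hx : ∀ k, x k = b k + 1 / x (k + 1)) (hy : ∀ k, y k = b k + 1 / y (k + 1)) :
    x 0 = y 0 := by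
  have hxpos : ∀ k, 0 < x k := fun k => lt_trans one_pos (hx1 k)
  have hypos : ∀ k, 0 < y k := fun k => lt_trans one_pos (hy1 k)
  have key : ∀ k, |x (k + 1) - y (k + 1)| = |x k - y k| * (x (k + 1) * y (k + 1)) := by
    intro k
    have h2 : (x k - y k) * (x (k + 1) * y (k + 1)) = y (k + 1) - x (k + 1) := by
      have hxne : x (k + 1) ≠ 0 := ne_of_gt (hxpos _)
      have hyne : y (k + 1) ≠ 0 := ne_of_gt (hypos _)
      rw [hx k, hy k]
      field_simp
      ring
    calc |x (k + 1) - y (k + 1)| = |y (k + 1) - x (k + 1)| := abs_sub_comm _ _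
      _ = |(x k - y k) * (x (k + 1) * y (k + 1))| := by rw [h2]
      _ = |x k - y k| * |x (k + 1) * y (k + 1)| := abs_mul _ _
      _ = |x k - y k| * (x (k + 1) * y (k + 1)) := by
            rw [abs_of_pos (mul_pos (hxpos _) (hypos _))]
  have hinvx : ∀ k, 0 < 1 / x (k + 1) ∧ 1 / x (k + 1) < 1 := by
    intro k
    constructor
    · exact div_pos one_pos (hxpos _)
    · rw [div_lt_one (hxpos _)]; exact hx1 _
  have hinvy : ∀ k, 0 < 1 / y (k + 1) ∧ 1 / y (k + 1) < 1 := by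
    intro k
    constructor
    · exact div_pos one_pos (hypos _)
    · rw [div_lt_one (hypos _)]; exact hy1 _
  have bound : ∀ k, |x k - y k| < 1 := by
    intro k
    rw [hx k, hy k, abs_lt]
    have h1 := hinvx k; have h2 := hinvy k
    constructor <;> nlinarith [h1.1, h1.2, h2.1, h2.2]
  have pairx : ∀ k, 2 ≤ x k * x (k + 1) := by
    intro k
    have h1 : (1 : ℝ) ≤ b k := by exact_mod_cast hb k
    have h2 := hx1 (k + 1)
    have h3 : 1 / x (k + 1) * x (k + 1) = 1 := one_div_mul_cancel (ne_of_gt (hxpos _))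
    rw [hx k]
    nlinarith
  have pairy : ∀ k, 2 ≤ y k * y (k + 1) := by
    intro k
    have h1 : (1 : ℝ) ≤ b k := by exact_mod_cast hb k
    have h2 := hy1 (k + 1)
    have h3 : 1 / y (k + 1) * y (k + 1) = 1 := one_div_mul_cancel (ne_of_gt (hypos _))
    rw [hy k]
    nlinarith
  have grow : ∀ n : ℕ, |x 0 - y 0| * 2 ^ n ≤ |x (2 * n) - y (2 * n)| := by
    intro n
    induction n with
    | zero => simp
    | succ n ih =>
      have e1 := key (2 * n)
      have e2 := key (2 * n + 1)
      have hpx := pairx (2 * n + 1)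
      have hpy := pairy (2 * n + 1)
      have hidx : 2 * (n + 1) = 2 * n + 1 + 1 := by omega
      rw [hidx, e2, e1]
      have habs : (0 : ℝ) ≤ |x (2 * n) - y (2 * n)| := abs_nonneg _
      have hxp1 := hxpos (2 * n + 1); have hxp2 := hxpos (2 * n + 1 + 1)
      have hyp1 := hypos (2 * n + 1); have hyp2 := hypos (2 * n + 1 + 1)
      calc |x 0 - y 0| * 2 ^ (n + 1) = |x 0 - y 0| * 2 ^ n * 2 := by ring
        _ ≤ |x (2 * n) - y (2 * n)| * 2 := by linarith
        _ ≤ |x (2 * n) - y (2 * n)| *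
              ((x (2 * n + 1) * y (2 * n + 1)) * (x (2 * n + 1 + 1) * y (2 * n + 1 + 1))) := by
            have hAB : (4 : ℝ) ≤ (x (2 * n + 1) * y (2 * n + 1)) *
                (x (2 * n + 1 + 1) * y (2 * n + 1 + 1)) := by nlinarith
            nlinarith [mul_nonneg habs (show (0 : ℝ) ≤ (x (2 * n + 1) * y (2 * n + 1)) *
                (x (2 * n + 1 + 1) * y (2 * n + 1 + 1)) - 2 by linarith)]
        _ = |x (2 * n) - y (2 * n)| * (x (2 * n + 1) * y (2 * n + 1)) *
              (x (2 * n + 1 + 1) * y (2 * n + 1 + 1)) := by ring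
  by_contra h
  have hd : 0 < |x 0 - y 0| := abs_pos.mpr (sub_ne_zero.mpr h)
  obtain ⟨n, hn⟩ := pow_unbounded_of_one_lt (1 / |x 0 - y 0|) (by norm_num : (1 : ℝ) < 2)
  have h1 : (1 : ℝ) < |x 0 - y 0| * 2 ^ n := by
    rw [div_lt_iff₀ hd] at hn
    nlinarith
  have h2 := grow n
  have h3 := bound (2 * n)
  linarith

def GoalP (N : ℤ) (p q : ℤ → ℤ) (T m : ℤ) : Prop :=
  p (T - m - 2) = ((m - 1).negOnePow : ℤ) * p (T - 1) * p m
      + (m.negOnePow : ℤ) * N * q (T - 1) * q m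
    ∧ q (T - m - 2) = (m.negOnePow : ℤ) * p (T - 1) * q m
      + ((m - 1).negOnePow : ℤ) * q (T - 1) * p m

lemma negOnePow_flip (k : ℤ) : ((k + 1).negOnePow : ℤ) = -(k.negOnePow : ℤ) := by
  rw [Int.negOnePow_succ, Units.val_neg]

lemma negOnePow_sq' (k : ℤ) : (k.negOnePow : ℤ) * (k.negOnePow : ℤ) = 1 := by
  rw [← Units.val_mul, Int.units_mul_self, Units.val_one]

lemma negOnePow_neg_one : (((-1 : ℤ)).negOnePow : ℤ) = -1 := by
  rw [Int.negOnePow_odd _ ⟨-1, by ring⟩, Units.val_neg, Units.val_one]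

lemma negOnePow_neg_two : (((-2 : ℤ)).negOnePow : ℤ) = 1 := by
  rw [Int.negOnePow_even _ ⟨-1, by ring⟩, Units.val_one]

lemma negOnePow_one' : (((1 : ℤ)).negOnePow : ℤ) = -1 := by
  rw [Int.negOnePow_one, Units.val_neg, Units.val_one]

lemma negOnePow_zero' : (((0 : ℤ)).negOnePow : ℤ) = 1 := by
  rw [Int.negOnePow_zero, Units.val_one]

lemma finalInd (N : ℤ) (a p q : ℤ → ℤ) (T : ℤ) (hT : 1 ≤ T)
    (hp1 : p (-1) = 1) (hq1 : q (-1) = 0)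
    (hprec : ∀ m : ℤ, 1 ≤ m → p m = a m * p (m - 1) + p (m - 2))
    (hqrec : ∀ m : ℤ, 1 ≤ m → q m = a m * q (m - 1) + q (m - 2))
    (hpal : ∀ m : ℤ, 1 ≤ m → m ≤ T - 1 → a (T - m) = a m)
    (hb0p : p (T - 2) = -(p (T - 1) * p 0) + N * (q (T - 1) * q 0))
    (hb0q : q (T - 2) = p (T - 1) * q 0 - q (T - 1) * p 0) :
    ∀ m : ℤ, -1 ≤ m → m ≤ T - 1 → GoalP N p q T m := by
  have key : ∀ k : ℤ, 0 ≤ k → k ≤ T - 1 → GoalP N p q T (k - 1) ∧ GoalP N p q T k := by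
    refine Int.le_induction ?_ ?_
    · intro _
      constructor
      · constructor
        · rw [show T - (0 - 1 : ℤ) - 2 = T - 1 by ring, show (0:ℤ) - 1 = -1 by ring,
            show (-1:ℤ) - 1 = -2 by ring, hp1, hq1, negOnePow_neg_one, negOnePow_neg_two]
          ring
        · rw [show T - (0 - 1 : ℤ) - 2 = T - 1 by ring, show (0:ℤ) - 1 = -1 by ring,
            show (-1:ℤ) - 1 = -2 by ring, hp1, hq1, negOnePow_neg_one, negOnePow_neg_two]
          ring
      · constructor
        · rw [show T - (0:ℤ) - 2 = T - 2 by ring, show (0:ℤ) - 1 = -1 by ring,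
            negOnePow_neg_one, negOnePow_zero']
          linear_combination hb0p
        · rw [show T - (0:ℤ) - 2 = T - 2 by ring, show (0:ℤ) - 1 = -1 by ring,
            negOnePow_neg_one, negOnePow_zero']
          linear_combination hb0q
    · intro k hk ih hk1
      obtain ⟨G1, G2⟩ := ih (by omega)
      refine ⟨by rwa [show k + 1 - 1 = k by ring], ?_⟩
      obtain ⟨G1p, G1q⟩ := G1
      obtain ⟨G2p, G2q⟩ := G2
      rw [show T - (k - 1) - 2 = T - k - 1 by ring, show k - 1 - 1 = k - 2 by ring] at G1p G1q
      have hrp := hprec (k + 1) (by omega)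
      have hrq := hqrec (k + 1) (by omega)
      rw [show k + 1 - 1 = k by ring, show k + 1 - 2 = k - 1 by ring] at hrp hrq
      have hrp2 := hprec (T - k - 1) (by omega)
      have hrq2 := hqrec (T - k - 1) (by omega)
      rw [show T - k - 1 - 1 = T - k - 2 by ring, show T - k - 1 - 2 = T - k - 3 by ring]
        at hrp2 hrq2
      have hpal' := hpal (k + 1) (by omega) (by omega)
      rw [show T - (k + 1) = T - k - 1 by ring] at hpal'
      have hfk : ((k + 1).negOnePow : ℤ) = -(k.negOnePow : ℤ) := negOnePow_flip k
      have hfk1 : ((k - 1).negOnePow : ℤ) = -(k.negOnePow : ℤ) := by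
        have := negOnePow_flip (k - 1)
        rw [show k - 1 + 1 = k by ring] at this
        linarith
      have hfk2 : ((k - 2).negOnePow : ℤ) = (k.negOnePow : ℤ) := by
        have := negOnePow_flip (k - 2)
        rw [show k - 2 + 1 = k - 1 by ring] at this
        rw [hfk1] at this
        linarith
      rw [hfk1] at G1p G1q G2p G2q
      rw [hfk2] at G1p G1q
      constructor
      · rw [show T - (k + 1) - 2 = T - k - 3 by ring, show k + 1 - 1 = k by ring, hfk]
        linear_combination (-1 : ℤ) * hrp2 - p (T - k - 2) * hpal' + G1p - a (k + 1) * G2p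
          - ((k.negOnePow : ℤ) * p (T - 1)) * hrp + ((k.negOnePow : ℤ) * N * q (T - 1)) * hrq
      · rw [show T - (k + 1) - 2 = T - k - 3 by ring, show k + 1 - 1 = k by ring, hfk]
        linear_combination (-1 : ℤ) * hrq2 - q (T - k - 2) * hpal' + G1q - a (k + 1) * G2q
          + ((k.negOnePow : ℤ) * p (T - 1)) * hrq - ((k.negOnePow : ℤ) * q (T - 1)) * hrp
  intro m hm1 hm2
  rcases eq_or_lt_of_le hm1 with h | h
  · have := (key 0 le_rfl (by omega)).1
    rwa [show (0:ℤ) - 1 = -1 by ring, h] at this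
  · exact (key m (by omega) hm2).2

theorem stmt_3
    (N : ℕ) (hN : 0 < N) (hNsq : ¬ IsSquare N)
    (a P Q : ℤ → ℤ)
    (hP0 : P 0 = 0) (hQ0 : Q 0 = 1)
    (ha : ∀ m : ℤ, 0 ≤ m → a m = ⌊((P m : ℝ) + Real.sqrt N) / (Q m : ℝ)⌋)
    (hPrec : ∀ m : ℤ, 0 ≤ m → P (m + 1) = a m * Q m - P m)
    (hQrec : ∀ m : ℤ, 0 ≤ m → Q (m + 1) * Q m = (N : ℤ) - P (m + 1) ^ 2)
    (τ : ℕ) (hτ : 0 < τ)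
    (hper : ∀ n : ℤ, 1 ≤ n → a (n + τ) = a n)
    (hmin : ∀ τ' : ℕ, 0 < τ' → (∀ n : ℤ, 1 ≤ n → a (n + τ') = a n) → τ ≤ τ')
    (p q : ℤ → ℤ)
    (hp1 : p (-1) = 1) (hp0 : p 0 = a 0)
    (hq1 : q (-1) = 0) (hq0 : q 0 = 1)
    (hprec : ∀ m : ℤ, 1 ≤ m → p m = a m * p (m - 1) + p (m - 2))
    (hqrec : ∀ m : ℤ, 1 ≤ m → q m = a m * q (m - 1) + q (m - 2))
    :
    ∀ m : ℤ, -1 ≤ m → m ≤ (τ : ℤ) - 1 →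
      p ((τ : ℤ) - m - 2)
          = ((m - 1).negOnePow : ℤ) * p ((τ : ℤ) - 1) * p m
            + (m.negOnePow : ℤ) * (N : ℤ) * q ((τ : ℤ) - 1) * q m
        ∧ q ((τ : ℤ) - m - 2)
          = (m.negOnePow : ℤ) * p ((τ : ℤ) - 1) * q m
            + ((m - 1).negOnePow : ℤ) * q ((τ : ℤ) - 1) * p m := by
  -- basic facts
  set s : ℝ := Real.sqrt N with hs_def
  have hτ1 : (1 : ℤ) ≤ (τ : ℤ) := by exact_mod_cast hτ
  have hs2 : s ^ 2 = (N : ℝ) := Real.sq_sqrt (by positivity)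
  have hsirr : Irrational s := irrational_sqrt_natCast_iff.mpr hNsq
  have hN2 : 2 ≤ N := by
    rcases Nat.lt_or_ge N 2 with h | h
    · interval_cases N
      exact absurd ⟨1, rfl⟩ hNsq
    · exact h
  have hs1 : 1 < s := by
    rw [hs_def, show (1:ℝ) = Real.sqrt 1 by simp]
    exact Real.sqrt_lt_sqrt (by norm_num) (by exact_mod_cast hN2)
  have hsqne : ∀ z : ℤ, (N : ℤ) - z ^ 2 ≠ 0 := by
    intro z hz
    apply hNsq
    rw [← Int.isSquare_natCast_iff]
    exact ⟨z, by nlinarith [hz]⟩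
  have hQne : ∀ m : ℤ, 0 ≤ m → Q m ≠ 0 := by
    refine Int.le_induction ?_ ?_
    · rw [hQ0]; norm_num
    · intro n hn _ h0
      have h1 := hQrec n hn
      rw [h0, zero_mul] at h1
      exact hsqne (P (n + 1)) h1.symm
  set ω : ℤ → ℝ := fun m => ((P m : ℝ) + s) / (Q m : ℝ) with hω_def
  have hωirr : ∀ m : ℤ, 0 ≤ m → Irrational (ω m) := by
    intro m hm
    exact (hsirr.intCast_add (P m)).div_intCast (hQne m hm)
  have hafloor : ∀ m : ℤ, 0 ≤ m → a m = ⌊ω m⌋ := fun m hm => ha m hm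
  have hωstep : ∀ m : ℤ, 0 ≤ m → (ω m - a m) * ω (m + 1) = 1 := by
    intro m hm
    have hQm : (Q m : ℝ) ≠ 0 := Int.cast_ne_zero.mpr (hQne m hm)
    have hQm1 : (Q (m + 1) : ℝ) ≠ 0 := Int.cast_ne_zero.mpr (hQne (m + 1) (by omega))
    have hPR : ((P (m + 1) : ℤ) : ℝ) = (a m : ℝ) * (Q m : ℝ) - (P m : ℝ) := by
      exact_mod_cast congrArg (fun z : ℤ => (z : ℝ)) (hPrec m hm)
    have hQR : ((Q (m + 1) : ℤ) : ℝ) * (Q m : ℝ) = (N : ℝ) - ((P (m + 1) : ℤ) : ℝ) ^ 2 := by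
      exact_mod_cast congrArg (fun z : ℤ => (z : ℝ)) (hQrec m hm)
    show (((P m : ℝ) + s) / (Q m : ℝ) - (a m : ℝ)) * (((P (m + 1) : ℝ) + s) / (Q (m + 1) : ℝ)) = 1
    field_simp
    linear_combination hs2 - hQR + (((P (m + 1) : ℝ)) + s) * hPR
  have hωfrac : ∀ m : ℤ, 0 ≤ m → 0 < ω m - a m ∧ ω m - a m < 1 := by
    intro m hm
    have hf := hafloor m hm
    have hirr := hωirr m hm
    constructor
    · have h1 : ((a m : ℤ) : ℝ) ≤ ω m := hf ▸ Int.floor_le (ω m)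
      have hne : ((a m : ℤ) : ℝ) ≠ ω m := fun h => hirr.ne_int (a m) h.symm
      have := lt_of_le_of_ne h1 hne
      linarith
    · have := Int.lt_floor_add_one (ω m)
      rw [← hf] at this
      push_cast at this
      linarith
  have hω1 : ∀ m : ℤ, 1 ≤ m → 1 < ω m := by
    intro m hm
    have h := hωstep (m - 1) (by omega)
    have hfr := hωfrac (m - 1) (by omega)
    rw [show m - 1 + 1 = m by ring] at h
    nlinarith [hfr.1, hfr.2]
  have hωeq : ∀ m : ℤ, 0 ≤ m → ω m = a m + 1 / ω (m + 1) := by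
    intro m hm
    have h := hωstep m hm
    have hne : ω (m + 1) ≠ 0 := by
      have := hω1 (m + 1) (by omega); linarith
    have h2 : ω m - a m = 1 / ω (m + 1) := by
      rw [eq_div_iff hne]; exact h
    linarith
  have ha1 : ∀ m : ℤ, 1 ≤ m → 1 ≤ a m := by
    intro m hm
    rw [hafloor m (by omega)]
    exact Int.le_floor.mpr (by exact_mod_cast (hω1 m hm).le)
  have hω0 : ω 0 = s := by
    show ((P 0 : ℝ) + s) / (Q 0 : ℝ) = s
    rw [hP0, hQ0]; push_cast; ring
  have ha0 : a 0 = ⌊s⌋ := by rw [hafloor 0 le_rfl, hω0]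
  have ha0pos : 1 ≤ a 0 := by
    rw [ha0]
    exact Int.le_floor.mpr (by exact_mod_cast hs1.le)
  -- periodicity of ω
  have hωper : ∀ m : ℤ, 1 ≤ m → ω (m + τ) = ω m := by
    intro m hm
    have h : (fun k : ℕ => ω (m + ↑τ + ↑k)) 0 = (fun k : ℕ => ω (m + ↑k)) 0 := by
      apply cfUnique (fun k : ℕ => ω (m + ↑τ + ↑k)) (fun k : ℕ => ω (m + ↑k))
          (fun k : ℕ => a (m + ↑k))
      · intro k; exact ha1 _ (by omega)
      · intro k; exact hω1 _ (by omega)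
      · intro k; exact hω1 _ (by omega)
      · intro k
        show ω (m + ↑τ + ↑k) = ↑(a (m + ↑k)) + 1 / ω (m + ↑τ + ↑(k + 1))
        push_cast
        have e1 := hωeq (m + ↑τ + ↑k) (by omega)
        have e2 := hper (m + ↑k) (by omega)
        rw [show m + (↑τ : ℤ) + (↑k + 1) = (m + ↑τ + ↑k) + 1 by ring, e1,
          show m + (↑τ : ℤ) + ↑k = (m + ↑k) + ↑τ by ring, e2]
      · intro k
        show ω (m + ↑k) = ↑(a (m + ↑k)) + 1 / ω (m + ↑(k + 1))
        push_cast
        rw [show m + ((↑k : ℤ) + 1) = (m + ↑k) + 1 by ring]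
        exact hωeq (m + ↑k) (by omega)
    simpa using h
  have hPQper : ∀ m : ℤ, 1 ≤ m → P (m + τ) = P m ∧ Q (m + τ) = Q m := by
    intro m hm
    have hw := hωper m hm
    have hQ1ne : (Q (m + τ) : ℝ) ≠ 0 := Int.cast_ne_zero.mpr (hQne _ (by omega))
    have hQ2ne : (Q m : ℝ) ≠ 0 := Int.cast_ne_zero.mpr (hQne _ (by omega))
    have hcross : ((P (m + τ) : ℝ) + s) * (Q m : ℝ) = ((P m : ℝ) + s) * (Q (m + τ) : ℝ) := by
      have h2 : ((P (m + τ) : ℝ) + s) / (Q (m + τ) : ℝ) = ((P m : ℝ) + s) / (Q m : ℝ) := hw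
      rw [div_eq_div_iff hQ1ne hQ2ne] at h2
      exact h2
    have hQeq : Q (m + τ) = Q m := by
      by_contra hne
      have hd : (Q m - Q (m + τ) : ℤ) ≠ 0 := by omega
      apply hsirr
      refine ⟨((P m * Q (m + τ) - P (m + τ) * Q m : ℤ) : ℚ) / ((Q m - Q (m + τ) : ℤ) : ℚ), ?_⟩
      have hdR : ((Q m : ℝ) - (Q (m + τ) : ℝ)) ≠ 0 := by
        have h3 : ((Q m - Q (m + τ) : ℤ) : ℝ) ≠ 0 := Int.cast_ne_zero.mpr hd
        push_cast at h3
        exact h3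
      push_cast
      rw [div_eq_iff hdR]
      linear_combination -hcross
    have hPeq : P (m + τ) = P m := by
      rw [hQeq] at hcross
      have h4 := mul_right_cancel₀ hQ2ne hcross
      have h5 : ((P (m + τ) : ℝ)) = (P m : ℝ) := by linarith
      exact_mod_cast h5
    exact ⟨hPeq, hQeq⟩
  have hP1 : P 1 = a 0 := by
    have h := hPrec 0 le_rfl
    rw [hP0, hQ0] at h
    simpa using h
  have hQ1v : Q 1 = N - a 0 ^ 2 := by
    have h := hQrec 0 le_rfl
    rw [hQ0, show (0 : ℤ) + 1 = 1 by norm_num, hP1] at h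
    simpa using h
  have hPper1 : P (1 + τ) = P 1 := (hPQper 1 le_rfl).1
  have hQper1 : Q (1 + τ) = Q 1 := (hPQper 1 le_rfl).2
  have hQτ : Q (τ : ℤ) = 1 := by
    have h1 := hQrec (τ : ℤ) (by omega)
    rw [show (τ : ℤ) + 1 = 1 + τ by ring, hPper1, hQper1, hP1, hQ1v] at h1
    have hne : (N : ℤ) - a 0 ^ 2 ≠ 0 := hsqne (a 0)
    exact mul_left_cancel₀ hne (by linarith)
  -- the backward sequence β
  set β : ℤ → ℝ := fun m => ((P m : ℝ) + s) / (Q (m - 1) : ℝ) with hβ_def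
  have hβ1 : β 1 = (a 0 : ℝ) + s := by
    show ((P 1 : ℝ) + s) / (Q (1 - 1 : ℤ) : ℝ) = _
    rw [show (1 : ℤ) - 1 = 0 by ring, hP1, hQ0]
    push_cast
    ring
  have hsPne : ∀ m : ℤ, ((P m : ℝ) + s) ≠ 0 := by
    intro m h
    exact ((hsirr.intCast_add (P m)).ne_zero) h
  have hβstep : ∀ m : ℤ, 1 ≤ m → β (m + 1) = a m + 1 / β m := by
    intro m hm
    have hQm : (Q m : ℝ) ≠ 0 := Int.cast_ne_zero.mpr (hQne m (by omega))
    have hQm1 : (Q (m - 1) : ℝ) ≠ 0 := Int.cast_ne_zero.mpr (hQne (m - 1) (by omega))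
    have hPR : ((P (m + 1) : ℝ)) = (a m : ℝ) * (Q m : ℝ) - (P m : ℝ) := by
      exact_mod_cast congrArg (fun z : ℤ => (z : ℝ)) (hPrec m (by omega))
    have hQR : ((Q m : ℝ)) * (Q (m - 1) : ℝ) = (N : ℝ) - (P m : ℝ) ^ 2 := by
      have h6 := hQrec (m - 1) (by omega)
      rw [show m - 1 + 1 = m by ring] at h6
      exact_mod_cast congrArg (fun z : ℤ => (z : ℝ)) h6
    show ((P (m + 1) : ℝ) + s) / (Q (m + 1 - 1) : ℝ)
        = (a m : ℝ) + 1 / (((P m : ℝ) + s) / (Q (m - 1) : ℝ))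
    rw [show m + 1 - 1 = m by ring, one_div_div]
    have h8 : s + (P m : ℝ) ≠ 0 := by rw [add_comm]; exact hsPne m
    field_simp [h8, hsPne m]
    linear_combination hs2 + ((P m : ℝ) + s) * hPR - hQR
  have hβgt1 : ∀ m : ℤ, 1 ≤ m → 1 < β m := by
    refine Int.le_induction ?_ ?_
    · rw [hβ1]
      have h7 : (1 : ℝ) ≤ (a 0 : ℝ) := by exact_mod_cast ha0pos
      linarith
    · intro n hn ih
      rw [hβstep n hn]
      have h1 : (1 : ℝ) ≤ (a n : ℝ) := by exact_mod_cast ha1 n hn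
      have h2 : 0 < 1 / β n := div_pos one_pos (by linarith)
      linarith
  have hβfloor : ∀ m : ℤ, 1 ≤ m → ⌊β (m + 1)⌋ = a m := by
    intro m hm
    rw [hβstep m hm]
    have hb := hβgt1 m hm
    have h1 : 0 < 1 / β m := div_pos one_pos (by linarith)
    have h2 : 1 / β m < 1 := by rw [div_lt_one (by linarith)]; exact hb
    rw [add_comm, Int.floor_add_intCast, Int.floor_eq_zero_iff.mpr ⟨h1.le, h2⟩, zero_add]
  have hβper : β ((τ : ℤ) + 1) = β 1 := by
    show ((P ((τ : ℤ) + 1) : ℝ) + s) / (Q ((τ : ℤ) + 1 - 1) : ℝ) = _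
    rw [show (τ : ℤ) + 1 - 1 = (τ : ℤ) by ring, show (τ : ℤ) + 1 = 1 + τ by ring, hPper1,
      hQτ, hβ1, hP1]
    push_cast
    ring
  have haτv : a (τ : ℤ) = 2 * a 0 := by
    have h := hβfloor (τ : ℤ) hτ1
    rw [hβper, hβ1, add_comm ((a 0 : ℤ) : ℝ) s, Int.floor_add_intCast, ← ha0] at h
    omega
  have hPτ : P (τ : ℤ) = a 0 := by
    have h := hPrec (τ : ℤ) (by omega)
    rw [show (τ : ℤ) + 1 = 1 + τ by ring, hPper1, hP1, hQτ, haτv] at h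
    linarith
  -- symmetry between β and ω
  have hsym : ∀ k : ℤ, 0 ≤ k → k ≤ (τ : ℤ) - 1 → β ((τ : ℤ) - k) = ω (k + 1) := by
    refine Int.le_induction ?_ ?_
    · intro _
      have h1 := hβstep (τ : ℤ) hτ1
      rw [hβper, hβ1, haτv] at h1
      have h3 := hωeq 0 le_rfl
      rw [hω0, show (0 : ℤ) + 1 = 1 by ring] at h3
      have hβτpos : (0 : ℝ) < β (τ : ℤ) := by linarith [hβgt1 (τ : ℤ) hτ1]
      have hω1pos : (0 : ℝ) < ω 1 := by linarith [hω1 1 le_rfl]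
      have h4 : 1 / β (τ : ℤ) = 1 / ω 1 := by
        push_cast at h1
        linarith
      rw [div_eq_div_iff (ne_of_gt hβτpos) (ne_of_gt hω1pos)] at h4
      rw [show (τ : ℤ) - 0 = (τ : ℤ) by ring, show (0 : ℤ) + 1 = 1 by ring]
      linarith
    · intro k hk ih hk1
      have hIH := ih (by omega)
      have hm1 : (1 : ℤ) ≤ (τ : ℤ) - k - 1 := by omega
      have h1 := hβstep ((τ : ℤ) - k - 1) hm1
      rw [show (τ : ℤ) - k - 1 + 1 = (τ : ℤ) - k by ring] at h1
      have h2 := hωeq (k + 1) (by omega)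
      have hfl1 := hβfloor ((τ : ℤ) - k - 1) hm1
      rw [show (τ : ℤ) - k - 1 + 1 = (τ : ℤ) - k by ring] at hfl1
      have hfl2 : ⌊ω (k + 1)⌋ = a (k + 1) := (hafloor (k + 1) (by omega)).symm
      have haeq : a ((τ : ℤ) - k - 1) = a (k + 1) := by rw [← hfl1, ← hfl2, hIH]
      have hceq : ((a ((τ : ℤ) - k - 1) : ℤ) : ℝ) = ((a (k + 1) : ℤ) : ℝ) := by
        exact_mod_cast haeq
      have h4 : 1 / β ((τ : ℤ) - k - 1) = 1 / ω (k + 1 + 1) := by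
        rw [hIH] at h1
        linarith [h1, h2, hceq]
      have hβpos : (0 : ℝ) < β ((τ : ℤ) - k - 1) := by linarith [hβgt1 _ hm1]
      have hωpos : (0 : ℝ) < ω (k + 1 + 1) := by linarith [hω1 (k + 1 + 1) (by omega)]
      rw [div_eq_div_iff (ne_of_gt hβpos) (ne_of_gt hωpos)] at h4
      rw [show (τ : ℤ) - (k + 1) = (τ : ℤ) - k - 1 by ring]
      linarith
  have hpal : ∀ m : ℤ, 1 ≤ m → m ≤ (τ : ℤ) - 1 → a ((τ : ℤ) - m) = a m := by
    intro m h1 h2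
    have hs' := hsym (m - 1) (by omega) (by omega)
    rw [show m - 1 + 1 = m by ring] at hs'
    have hfl := hβfloor ((τ : ℤ) - m) (by omega)
    rw [show (τ : ℤ) - m + 1 = (τ : ℤ) - (m - 1) by ring, hs'] at hfl
    rw [← hfl]
    exact (hafloor m (by omega)).symm
  -- the determinant identity
  have hdet : ∀ n : ℤ, 0 ≤ n → p n * q (n - 1) - p (n - 1) * q n = ((n + 1).negOnePow : ℤ) := by
    refine Int.le_induction ?_ ?_
    · rw [show (0 : ℤ) - 1 = -1 by ring, hp0, hq1, hp1, hq0,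
        show (0 : ℤ) + 1 = 1 by ring, negOnePow_one']
      ring
    · intro n hn ih
      have hrp := hprec (n + 1) (by omega)
      have hrq := hqrec (n + 1) (by omega)
      rw [show n + 1 - 1 = n by ring, show n + 1 - 2 = n - 1 by ring] at hrp hrq
      rw [show n + 1 - 1 = n by ring, negOnePow_flip (n + 1), negOnePow_flip n]
      rw [negOnePow_flip n] at ih
      linear_combination q n * hrp - p n * hrq - ih
  -- the divided form of the Q recurrence
  have hQlin : ∀ n : ℤ, 1 ≤ n → Q (n + 1) = Q (n - 1) + 2 * a n * P n - a n ^ 2 * Q n := by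
    intro n hn
    have h1 := hQrec n (by omega)
    have h2 : Q n * Q (n - 1) = (N : ℤ) - P n ^ 2 := by
      have h3 := hQrec (n - 1) (by omega)
      rwa [show n - 1 + 1 = n by ring] at h3
    have h3 := hPrec n (by omega)
    apply mul_right_cancel₀ (hQne n (by omega))
    linear_combination h1 - h2 - (a n * Q n - P n + P (n + 1)) * h3
  -- the Pell-type identities
  have hI : ∀ n : ℤ, 1 ≤ n →
      (p (n - 1) ^ 2 - N * q (n - 1) ^ 2 = (n.negOnePow : ℤ) * Q n) ∧
      (p (n - 1) * p (n - 2) - N * q (n - 1) * q (n - 2) = ((n - 1).negOnePow : ℤ) * P n) ∧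
      (p (n - 2) ^ 2 - N * q (n - 2) ^ 2 = ((n - 1).negOnePow : ℤ) * Q (n - 1)) := by
    refine Int.le_induction ?_ ?_
    · rw [show (1 : ℤ) - 1 = 0 by ring, show (1 : ℤ) - 2 = -1 by ring,
        hp0, hq0, hp1, hq1, hQ0, hQ1v, hP1, negOnePow_one', negOnePow_zero']
      refine ⟨by ring, by ring, by ring⟩
    · intro n hn ih
      obtain ⟨i1, i2, i3⟩ := ih
      rw [show n + 1 - 1 = n by ring, show n + 1 - 2 = n - 1 by ring]
      have hfn : ((n + 1).negOnePow : ℤ) = -(n.negOnePow : ℤ) := negOnePow_flip n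
      have hfn1 : ((n - 1).negOnePow : ℤ) = -(n.negOnePow : ℤ) := by
        have := negOnePow_flip (n - 1)
        rw [show n - 1 + 1 = n by ring] at this
        linarith
      rw [hfn1] at i2 i3
      have hrp := hprec n hn
      have hrq := hqrec n hn
      have hQl := hQlin n hn
      have hP3 := hPrec n (by omega)
      refine ⟨?_, ?_, i1⟩
      · rw [hfn]
        linear_combination (p n + a n * p (n - 1) + p (n - 2)) * hrp
          - (N : ℤ) * (q n + a n * q (n - 1) + q (n - 2)) * hrq
          + a n ^ 2 * i1 + 2 * a n * i2 + i3 + (n.negOnePow : ℤ) * hQl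
      · linear_combination p (n - 1) * hrp - (N : ℤ) * q (n - 1) * hrq
          + a n * i1 + i2 - (n.negOnePow : ℤ) * hP3
  -- the base identities at m = 0
  obtain ⟨I1, I2, -⟩ := hI (τ : ℤ) hτ1
  rw [hQτ, mul_one] at I1
  rw [hPτ] at I2
  have hfτ : (((τ : ℤ) - 1).negOnePow : ℤ) = -(((τ : ℤ)).negOnePow : ℤ) := by
    have := negOnePow_flip ((τ : ℤ) - 1)
    rw [show (τ : ℤ) - 1 + 1 = (τ : ℤ) by ring] at this
    linarith
  rw [hfτ] at I2
  have E3 := hdet ((τ : ℤ) - 1) (by omega)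
  rw [show (τ : ℤ) - 1 - 1 = (τ : ℤ) - 2 by ring, show (τ : ℤ) - 1 + 1 = (τ : ℤ) by ring] at E3
  have he := negOnePow_sq' (τ : ℤ)
  have hb0p : p ((τ : ℤ) - 2) = -(p ((τ : ℤ) - 1) * p 0) + (N : ℤ) * (q ((τ : ℤ) - 1) * q 0) := by
    rw [hp0, hq0]
    linear_combination (-((((τ : ℤ)).negOnePow : ℤ) * p ((τ : ℤ) - 2))) * I1
      + ((((τ : ℤ)).negOnePow : ℤ) * p ((τ : ℤ) - 1)) * I2
      + ((((τ : ℤ)).negOnePow : ℤ) * (N : ℤ) * q ((τ : ℤ) - 1)) * E3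
      - (p ((τ : ℤ) - 2) + a 0 * p ((τ : ℤ) - 1) - (N : ℤ) * q ((τ : ℤ) - 1)) * he
  have hb0q : q ((τ : ℤ) - 2) = p ((τ : ℤ) - 1) * q 0 - q ((τ : ℤ) - 1) * p 0 := by
    rw [hp0, hq0]
    linear_combination (-((((τ : ℤ)).negOnePow : ℤ) * q ((τ : ℤ) - 2))) * I1
      + ((((τ : ℤ)).negOnePow : ℤ) * q ((τ : ℤ) - 1)) * I2
      + ((((τ : ℤ)).negOnePow : ℤ) * p ((τ : ℤ) - 1)) * E3
      - (q ((τ : ℤ) - 2) + a 0 * q ((τ : ℤ) - 1) - p ((τ : ℤ) - 1)) * he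
  -- conclusion
  intro m hm1 hm2
  have hfin := finalInd (N : ℤ) a p q (τ : ℤ) hτ1 hp1 hq1 hprec hqrec hpal hb0p hb0q m hm1 hm2
  unfold GoalP at hfin
  exact hfin
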